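/- Let a ∈ ℤ and let b be an integer with |b| ≥ 2. Then the direct limit of the system ℤ² → ℤ² → ℤ² → ⋯ in which every bonding map is multiplication by the matrix M = [[1, a],[0, b]] is isomorphic, as an abelian group, to ℤ ⊕ ℤ[1/b]. -/

import Mathlib

/-- The subgroup `ℤ[1/b] = {m / bᵏ : m ∈ ℤ, k ∈ ℕ}` of `ℚ`. -/
def zOneOverPow (b : ℤ) (hb : b ≠ 0) : AddSubgroup ℚ where
  carrier := {q : ℚ | ∃ (m : ℤ) (k : ℕ), q = (m : ℚ) / (b : ℚ) ^ k}
  zero_mem' := ⟨0, 0, by simp⟩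
  add_mem' := by
    rintro x y ⟨m, k, rfl⟩ ⟨m', l, rfl⟩
    refine ⟨m * b ^ l + m' * b ^ k, k + l, ?_⟩
    have hb' : (b : ℚ) ≠ 0 := Int.cast_ne_zero.mpr hb
    have h1 : (b : ℚ) ^ k ≠ 0 := pow_ne_zero _ hb'
    have h2 : (b : ℚ) ^ l ≠ 0 := pow_ne_zero _ hb'
    rw [div_add_div _ _ h1 h2, pow_add]
    push_cast
    ring
  neg_mem' := by
    rintro x ⟨m, k, rfl⟩
    exact ⟨-m, k, by push_cast; ring⟩

private def sgeo (b : ℤ) : ℕ → ℤ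
  | 0 => 0
  | n+1 => 1 + b * sgeo b n

private lemma sgeo_mul (b : ℤ) (n : ℕ) : (b - 1) * sgeo b n = b ^ n - 1 := by
  induction n with
  | zero => simp [sgeo]
  | succ n ih => rw [sgeo, pow_succ]; linear_combination b * ih

private lemma sgeo_add (b : ℤ) (i n : ℕ) :
    sgeo b (i + n) = sgeo b i + b ^ i * sgeo b n := by
  induction n with
  | zero => simp [sgeo]
  | succ n ih =>
      rw [show i + (n+1) = (i + n) + 1 from rfl, sgeo, ih, sgeo]
      linear_combination sgeo_mul b i

private lemma Mpow (a b : ℤ) (n : ℕ) :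
    (!![1, a; 0, b] : Matrix (Fin 2) (Fin 2) ℤ) ^ n = !![1, a * sgeo b n; 0, b ^ n] := by
  induction n with
  | zero => rw [pow_zero]; simp [sgeo, Matrix.one_fin_two]
  | succ n ih =>
      rw [pow_succ, ih, Matrix.mul_fin_two]
      congr 1 <;> · rw [sgeo]; ring_nf; try rw [pow_succ]

private lemma mulVecLin_apply' (a b : ℤ) (n : ℕ) (v : Fin 2 → ℤ) :
    ((!![1, a; 0, b] : Matrix (Fin 2) (Fin 2) ℤ) ^ n).mulVecLin v
      = ![v 0 + a * sgeo b n * v 1, b ^ n * v 1] := by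
  rw [Mpow]
  funext j
  fin_cases j <;>
    simp [Matrix.mulVecLin_apply, Matrix.mulVec, dotProduct, Fin.sum_univ_two]

/-- For `|b| ≥ 2`, the direct limit of `ℤ² → ℤ² → ⋯` with all bonding maps multiplication
by `[[1, a], [0, b]]` is isomorphic, as an abelian group, to `ℤ ⊕ ℤ[1/b]`. -/
theorem stmt_17 (a b : ℤ) (hb : 2 ≤ |b|) :
    Nonempty
      (Module.DirectLimit (fun _ : ℕ => Fin 2 → ℤ)
          (fun i j _ => ((!![1, a; 0, b] : Matrix (Fin 2) (Fin 2) ℤ) ^ (j - i)).mulVecLin)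
        ≃+ ℤ × zOneOverPow b (by intro h; rw [h] at hb; simp at hb)) := by
  have hbne : b ≠ 0 := by intro h; rw [h] at hb; simp at hb
  have hb1 : b - 1 ≠ 0 := by
    intro h
    have : b = 1 := by linarith
    rw [this] at hb; norm_num at hb
  have hbQ : (b : ℚ) ≠ 0 := Int.cast_ne_zero.mpr hbne
  -- Bézout data
  set d : ℤ := (Int.gcd a (b - 1) : ℤ) with hd
  have hd0 : d ≠ 0 := by
    simp only [hd, Ne, Int.natCast_eq_zero, Int.gcd_eq_zero_iff]
    rintro ⟨-, h2⟩; exact hb1 h2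
  set p : ℤ := Int.gcdA a (b - 1) with hp
  set q : ℤ := Int.gcdB a (b - 1) with hq
  have hbez : d = a * p + (b - 1) * q := Int.gcd_eq_gcd_ab a (b - 1)
  obtain ⟨A, hA⟩ : d ∣ (b - 1) := Int.gcd_dvd_right a (b - 1)
  obtain ⟨B, hB⟩ : d ∣ a := Int.gcd_dvd_left a (b - 1)
  have hkey : A * q + B * p = 1 := by
    have h2 : d * 1 = d * (A * q + B * p) := by linear_combination hbez + p * hB + q * hA
    exact (mul_left_cancel₀ hd0 h2).symm
  set E : ℕ → ℤ := fun i => q - p * a * sgeo b i with hE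
  have hdetkey : ∀ i : ℕ, A * E i + B * (p * b ^ i) = 1 := by
    intro i
    simp only [hE]
    linear_combination hkey - B * p * sgeo_mul b i + B * p * sgeo b i * hA
      - p * A * sgeo b i * hB
  -- the compatible family of homomorphisms
  set g : ∀ _ : ℕ, (Fin 2 → ℤ) →ₗ[ℤ] ℤ × zOneOverPow b hbne := fun i =>
    AddMonoidHom.toIntLinearMap
      { toFun := fun v =>
          (A * v 0 - B * v 1,
            ⟨((p * b ^ i * v 0 + E i * v 1 : ℤ) : ℚ) / (b : ℚ) ^ i,
              p * b ^ i * v 0 + E i * v 1, i, rfl⟩)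
        map_zero' := by
          refine Prod.ext (by simp) (Subtype.ext ?_)
          simp
        map_add' := fun v w => by
          refine Prod.ext (by simp [Pi.add_apply]; ring) (Subtype.ext ?_)
          simp only [Prod.snd_add, AddSubgroup.coe_add, Pi.add_apply]
          push_cast
          ring } with hg
  have hgapply : ∀ (i : ℕ) (v : Fin 2 → ℤ),
      g i v = (A * v 0 - B * v 1,
        ⟨((p * b ^ i * v 0 + E i * v 1 : ℤ) : ℚ) / (b : ℚ) ^ i,
          p * b ^ i * v 0 + E i * v 1, i, rfl⟩) := fun i v => rfl
  have Hg : ∀ (i j : ℕ) (hij : i ≤ j) (x : Fin 2 → ℤ),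
      g j (((!![1, a; 0, b] : Matrix (Fin 2) (Fin 2) ℤ) ^ (j - i)).mulVecLin x) = g i x := by
    intro i j hij x
    set n := j - i with hn
    have hj : j = i + n := (Nat.add_sub_cancel' hij).symm
    rw [mulVecLin_apply' a b n x, hgapply, hgapply]
    have hv0 : (![x 0 + a * sgeo b n * x 1, b ^ n * x 1] : Fin 2 → ℤ) 0
        = x 0 + a * sgeo b n * x 1 := rfl
    have hv1 : (![x 0 + a * sgeo b n * x 1, b ^ n * x 1] : Fin 2 → ℤ) 1 = b ^ n * x 1 := rfl
    refine Prod.ext ?_ (Subtype.ext ?_)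
    · rw [hv0, hv1]
      have h1 : A * (a * sgeo b n) = B * (b ^ n - 1) := by
        linear_combination A * sgeo b n * hB - B * sgeo b n * hA + B * sgeo_mul b n
      dsimp only
      linear_combination x 1 * h1
    · rw [hv0, hv1]
      dsimp only
      rw [div_eq_div_iff (pow_ne_zero _ hbQ) (pow_ne_zero _ hbQ)]
      have hint : (p * b ^ j * (x 0 + a * sgeo b n * x 1) + E j * (b ^ n * x 1)) * b ^ i
          = (p * b ^ i * x 0 + E i * x 1) * b ^ j := by
        have hsj : sgeo b j = sgeo b i + b ^ i * sgeo b n := by rw [hj]; exact sgeo_add b i n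
        have hbj : (b : ℤ) ^ j = b ^ i * b ^ n := by rw [hj, pow_add]
        simp only [hE]
        rw [hsj, hbj]; ring
      exact_mod_cast hint
  -- the induced map on the direct limit
  set F := Module.DirectLimit.lift ℤ ℕ (fun _ : ℕ => Fin 2 → ℤ)
    (fun i j _ => ((!![1, a; 0, b] : Matrix (Fin 2) (Fin 2) ℤ) ^ (j - i)).mulVecLin) g Hg with hF
  have hinj : Function.Injective F := by
    rw [injective_iff_map_eq_zero]
    intro z hz
    obtain ⟨i, x, rfl⟩ := Module.DirectLimit.exists_of z
    rw [Module.DirectLimit.lift_of] at hz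
    rw [hgapply] at hz
    have h1 : A * x 0 - B * x 1 = 0 := congrArg Prod.fst hz
    have h2 : p * b ^ i * x 0 + E i * x 1 = 0 := by
      have h2' := congrArg (fun y : ℤ × zOneOverPow b hbne => (y.2 : ℚ)) hz
      simp only [ZeroMemClass.coe_zero] at h2'
      have := (div_eq_zero_iff.mp h2').resolve_right (pow_ne_zero _ hbQ)
      exact_mod_cast this
    have hx : x = 0 := by
      funext j
      fin_cases j
      · show x 0 = 0
        linear_combination E i * h1 + B * h2 - x 0 * hdetkey i
      · show x 1 = 0
        linear_combination A * h2 - p * b ^ i * h1 - x 1 * hdetkey i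
    rw [hx, map_zero]
  have hsurj : Function.Surjective F := by
    rintro ⟨u, w⟩
    obtain ⟨m, k, hw⟩ := w.2
    refine ⟨Module.DirectLimit.of ℤ ℕ (fun _ : ℕ => Fin 2 → ℤ)
      (fun i j _ => ((!![1, a; 0, b] : Matrix (Fin 2) (Fin 2) ℤ) ^ (j - i)).mulVecLin) k
      ![E k * u + B * m, -(p * b ^ k) * u + A * m], ?_⟩
    rw [hF, Module.DirectLimit.lift_of, hgapply]
    have hv0 : (![E k * u + B * m, -(p * b ^ k) * u + A * m] : Fin 2 → ℤ) 0
        = E k * u + B * m := rfl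
    have hv1 : (![E k * u + B * m, -(p * b ^ k) * u + A * m] : Fin 2 → ℤ) 1
        = -(p * b ^ k) * u + A * m := rfl
    refine Prod.ext ?_ (Subtype.ext ?_)
    · rw [hv0, hv1]
      dsimp only
      linear_combination u * hdetkey k
    · rw [hv0, hv1]
      dsimp only
      have hint : p * b ^ k * (E k * u + B * m) + E k * (-(p * b ^ k) * u + A * m) = m := by
        linear_combination m * hdetkey k
      rw [hint, hw]
  exact ⟨AddEquiv.ofBijective F.toAddMonoidHom ⟨hinj, hsurj⟩⟩
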